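/- Let E ⊂ B(0,1) ⊂ ℝ², ε ∈ (0,1), β ∈ (0,1/2). Let G = {x ∈ E : Θ*_{E,β}(x) ≤ ε}, where Θ*_{E,β}(x) = sup_{r>0} H¹(C_β(x,r) ∩ E)/r. Then there exists a 2β-Lipschitz graph Γ over the x-axis such that H¹(G ∖ Γ) ≲ ε/β (with an absolute implicit constant). -/

import Mathlib

open MeasureTheory Set Real
open scoped ENNReal NNReal

noncomputable section

abbrev Plane := EuclideanSpace ℝ (Fin 2)

def mk2 (a b : ℝ) : Plane := (WithLp.equiv 2 (Fin 2 → ℝ)).symm ![a, b]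

/-- Orthogonal projection onto direction (cos θ, sin θ). -/
def proj (θ : ℝ) (x : Plane) : ℝ := x 0 * Real.cos θ + x 1 * Real.sin θ

/-- Favard length. -/
def Fav (E : Set Plane) : ℝ≥0∞ := ∫⁻ θ in Set.Ioo 0 Real.pi, μH[1] (proj θ '' E)

/-- The (translated) double cone around the vertical axis: `C_β(x)`. -/
def cone (β : ℝ) (x : Plane) : Set Plane := {y | β * |y 0 - x 0| ≤ |y 1 - x 1|}


/-- Maximal conical density Θ*_{E,β}(x). -/
def conicalDensity (E : Set Plane) (β : ℝ) (x : Plane) : ℝ≥0∞ :=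
  ⨆ (r : ℝ) (_ : 0 < r), μH[1] (cone β x ∩ Metric.closedBall x r ∩ E) / ENNReal.ofReal r

namespace S7

lemma coord_dist_le (x y : Plane) (i : Fin 2) : |x i - y i| ≤ dist x y := by
  have h : dist (x i) (y i) ^ 2 ≤ ∑ j, dist (x j) (y j) ^ 2 :=
    Finset.single_le_sum (f := fun j => dist (x j) (y j) ^ 2) (fun j _ => sq_nonneg _) (Finset.mem_univ i)
  calc |x i - y i| = Real.sqrt (dist (x i) (y i) ^ 2) := by
        rw [Real.sqrt_sq dist_nonneg, Real.dist_eq]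
    _ ≤ Real.sqrt (∑ j, dist (x j) (y j) ^ 2) := Real.sqrt_le_sqrt h
    _ = dist x y := (EuclideanSpace.dist_eq x y).symm

lemma dist_le_coord (x y : Plane) : dist x y ≤ |x 0 - y 0| + |x 1 - y 1| := by
  rw [EuclideanSpace.dist_eq, Fin.sum_univ_two]
  rw [Real.dist_eq, Real.dist_eq]
  have h : |x 0 - y 0| ^ 2 + |x 1 - y 1| ^ 2 ≤ (|x 0 - y 0| + |x 1 - y 1|) ^ 2 := by
    nlinarith [abs_nonneg (x 0 - y 0), abs_nonneg (x 1 - y 1)]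
  calc Real.sqrt (|x 0 - y 0| ^ 2 + |x 1 - y 1| ^ 2)
      ≤ Real.sqrt ((|x 0 - y 0| + |x 1 - y 1|) ^ 2) := Real.sqrt_le_sqrt h
    _ = |x 0 - y 0| + |x 1 - y 1| := Real.sqrt_sq (by positivity)

lemma coord_le_of_mem {x : Plane} (hx : x ∈ Metric.closedBall (0 : Plane) 1) (i : Fin 2) :
    |x i| ≤ 1 := by
  have h := coord_dist_le x 0 i
  have h0 : (0 : Plane) i = 0 := rfl
  rw [h0, sub_zero] at h
  exact h.trans (Metric.mem_closedBall.1 hx)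

lemma budget {E : Set Plane} {β ε : ℝ} {x : Plane} (hε : 0 ≤ ε)
    (hx : conicalDensity E β x ≤ ENNReal.ofReal ε) {r : ℝ} (hr : 0 < r)
    {S : Set Plane} (hS : S ⊆ cone β x ∩ Metric.closedBall x r ∩ E) :
    μH[1] S ≤ ENNReal.ofReal (ε * r) := by
  have h1 : μH[1] (cone β x ∩ Metric.closedBall x r ∩ E) / ENNReal.ofReal r ≤
      conicalDensity E β x := by
    apply le_iSup_of_le r
    exact le_iSup_of_le hr le_rfl
  have h2 := h1.trans hx
  have hr0 : ENNReal.ofReal r ≠ 0 := by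
    simp only [ne_eq, ENNReal.ofReal_eq_zero, not_le]
    exact hr
  have hrt : ENNReal.ofReal r ≠ ⊤ := ENNReal.ofReal_ne_top
  rw [ENNReal.div_le_iff hr0 hrt] at h2
  calc μH[1] S ≤ μH[1] (cone β x ∩ Metric.closedBall x r ∩ E) := measure_mono hS
    _ ≤ ENNReal.ofReal ε * ENNReal.ofReal r := h2
    _ = ENNReal.ofReal (ε * r) := (ENNReal.ofReal_mul hε).symm


open scoped Classical

def tentf (β : ℝ) (p : Plane) (t : ℝ) : ℝ := p 1 - 2*β*|p 0 - t|

lemma tentf_lb {β : ℝ} (hβ : 0 ≤ β) (p : Plane) (s t : ℝ) :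
    tentf β p t - 2*β*|s - t| ≤ tentf β p s := by
  unfold tentf
  have h : |p 0 - s| ≤ |p 0 - t| + |s - t| := by
    have := abs_sub_le (p 0) t s
    have h2 : |t - s| = |s - t| := abs_sub_comm _ _
    linarith
  nlinarith [abs_nonneg (s - t), abs_nonneg (p 0 - t)]

variable {m : ℕ} (β : ℝ) (y : Fin (m+1) → Plane)

def Fenv (t : ℝ) : ℝ :=
  Finset.univ.sup' Finset.univ_nonempty (fun j => tentf β (y j) t)

lemma le_Fenv (j : Fin (m+1)) (t : ℝ) : tentf β (y j) t ≤ Fenv β y t := by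
  unfold Fenv
  exact Finset.le_sup' (fun j => tentf β (y j) t) (Finset.mem_univ j)

lemma Fenv_le {c : ℝ} {t : ℝ} (h : ∀ j, tentf β (y j) t ≤ c) : Fenv β y t ≤ c :=
  Finset.sup'_le _ _ (fun j _ => h j)

lemma filter_argm_nonempty (t : ℝ) :
    (Finset.univ.filter (fun j => Fenv β y t ≤ tentf β (y j) t)).Nonempty := by
  obtain ⟨j, hj, hje⟩ := Finset.exists_mem_eq_sup' (Finset.univ_nonempty)
    (fun j : Fin (m+1) => tentf β (y j) t)
  exact ⟨j, Finset.mem_filter.2 ⟨hj, le_of_eq hje⟩⟩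

def argm (t : ℝ) : Fin (m+1) :=
  (Finset.univ.filter (fun j => Fenv β y t ≤ tentf β (y j) t)).min'
    (filter_argm_nonempty β y t)

lemma argm_spec (t : ℝ) : tentf β (y (argm β y t)) t = Fenv β y t := by
  have h := Finset.min'_mem _ (filter_argm_nonempty β y t)
  rw [Finset.mem_filter] at h
  exact le_antisymm (le_Fenv β y _ t) h.2

lemma argm_min {t : ℝ} {k : Fin (m+1)} (h : Fenv β y t ≤ tentf β (y k) t) :
    argm β y t ≤ k := by
  apply Finset.min'_le
  exact Finset.mem_filter.2 ⟨Finset.mem_univ k, h⟩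

lemma abs4 {s t p q : ℝ} (hst : s ≤ t) (hpq : p ≤ q) :
    |t - q| + |s - p| ≤ |s - q| + |t - p| := by
  rcases abs_cases (t - q) with ⟨h1, h1'⟩ | ⟨h1, h1'⟩ <;>
  rcases abs_cases (s - p) with ⟨h2, h2'⟩ | ⟨h2, h2'⟩ <;>
  rcases abs_cases (s - q) with ⟨h3, h3'⟩ | ⟨h3, h3'⟩ <;>
  rcases abs_cases (t - p) with ⟨h4, h4'⟩ | ⟨h4, h4'⟩ <;>
  linarith

/-- If `p 0 ≤ p' 0` then `tentf β p - tentf β p'` is antitone. -/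
lemma tent_diff_antitone {β : ℝ} (hβ : 0 ≤ β) (p p' : Plane) (hpp : p 0 ≤ p' 0)
    {s t : ℝ} (hst : s ≤ t) :
    tentf β p t - tentf β p' t ≤ tentf β p s - tentf β p' s := by
  unfold tentf
  have h := abs4 (s := s) (t := t) (p := p 0) (q := p' 0) hst hpp
  have e1 : |t - p' 0| = |p' 0 - t| := abs_sub_comm _ _
  have e2 : |s - p 0| = |p 0 - s| := abs_sub_comm _ _
  have e3 : |s - p' 0| = |p' 0 - s| := abs_sub_comm _ _
  have e4 : |t - p 0| = |p 0 - t| := abs_sub_comm _ _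
  rw [e1, e2, e3, e4] at h
  nlinarith

lemma lemmaT {β : ℝ} (hβ : 0 ≤ β) (p p' : Plane) (h : p 1 ≤ tentf β p' (p 0)) (t : ℝ) :
    tentf β p t ≤ tentf β p' t := by
  have h2 := tentf_lb hβ p' t (p 0)
  have h3 : tentf β p t = p 1 - 2*β*|p 0 - t| := rfl
  have h4 : |t - p 0| = |p 0 - t| := abs_sub_comm _ _
  rw [h4] at h2
  nlinarith [abs_nonneg (p 0 - t)]

lemma lemmaT_strict {β : ℝ} (hβ : 0 ≤ β) (p p' : Plane) (h : p 1 < tentf β p' (p 0)) (t : ℝ) :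
    tentf β p t < tentf β p' t := by
  have h2 := tentf_lb hβ p' t (p 0)
  have h3 : tentf β p t = p 1 - 2*β*|p 0 - t| := rfl
  have h4 : |t - p 0| = |p 0 - t| := abs_sub_comm _ _
  rw [h4] at h2
  nlinarith [abs_nonneg (p 0 - t)]

lemma tentf_apex (β : ℝ) (p : Plane) : tentf β p (p 0) = p 1 := by
  unfold tentf
  simp

lemma argm_apex {β : ℝ} (hβ : 0 ≤ β) {t : ℝ} {j : Fin (m+1)} (h : argm β y t = j) :
    argm β y ((y j) 0) = j := by
  set a := (y j) 0 with ha
  set k := argm β y a with hk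
  have hkspec : tentf β (y k) a = Fenv β y a := argm_spec β y a
  have hja : tentf β (y j) a = (y j) 1 := tentf_apex β (y j)
  have hFa : (y j) 1 ≤ Fenv β y a := by
    have := le_Fenv β y j a
    rw [hja] at this; exact this
  -- tent k a = y j 1
  have heq : tentf β (y k) a = (y j) 1 := by
    by_contra hne
    have hlt : (y j) 1 < tentf β (y k) a := lt_of_le_of_ne (hkspec ▸ hFa) (Ne.symm hne)
    have hstrict := lemmaT_strict hβ (y j) (y k) hlt t
    have h1 : tentf β (y j) t = Fenv β y t := by rw [← h]; exact argm_spec β y t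
    have h2 := le_Fenv β y k t
    linarith
  -- j ≤ k :
  have hjk : j ≤ k := by
    have hge : (y j) 1 ≤ tentf β (y k) a := le_of_eq heq.symm
    have hall := lemmaT hβ (y j) (y k) hge t
    have h1 : tentf β (y j) t = Fenv β y t := by rw [← h]; exact argm_spec β y t
    have : Fenv β y t ≤ tentf β (y k) t := by linarith
    rw [← h]
    exact argm_min β y this
  have hkj : k ≤ j := by
    apply argm_min β y
    rw [hja, ← heq, hkspec]
  exact le_antisymm hkj hjk

lemma argm_between {β : ℝ} (hβ : 0 ≤ β) {t₁ t₂ t₃ : ℝ} {j : Fin (m+1)}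
    (h12 : t₁ ≤ t₂) (h23 : t₂ ≤ t₃) (h1 : argm β y t₁ = j) (h3 : argm β y t₃ = j) :
    argm β y t₂ = j := by
  have hs1 : tentf β (y j) t₁ = Fenv β y t₁ := by rw [← h1]; exact argm_spec β y t₁
  have hs3 : tentf β (y j) t₃ = Fenv β y t₃ := by rw [← h3]; exact argm_spec β y t₃
  -- Step 1 : j is an argmax at t₂
  have hstep1 : ∀ k, tentf β (y k) t₂ ≤ tentf β (y j) t₂ := by
    intro k
    have hk1 : tentf β (y k) t₁ ≤ tentf β (y j) t₁ := by
      rw [hs1]; exact le_Fenv β y k t₁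
    have hk3 : tentf β (y k) t₃ ≤ tentf β (y j) t₃ := by
      rw [hs3]; exact le_Fenv β y k t₃
    rcases le_total ((y j) 0) ((y k) 0) with hc | hc
    · have := tent_diff_antitone hβ (y j) (y k) hc h23
      linarith
    · have := tent_diff_antitone hβ (y k) (y j) hc h12
      linarith
  have hF2 : tentf β (y j) t₂ = Fenv β y t₂ := by
    apply le_antisymm (le_Fenv β y j t₂)
    exact Fenv_le β y hstep1
  -- Step 2: minimality
  set k := argm β y t₂ with hk
  have hkspec : tentf β (y k) t₂ = Fenv β y t₂ := argm_spec β y t₂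
  have hjk : j ≤ k := by
    have heq2 : tentf β (y k) t₂ = tentf β (y j) t₂ := by rw [hkspec, hF2]
    have hk1 : tentf β (y k) t₁ ≤ tentf β (y j) t₁ := by
      rw [hs1]; exact le_Fenv β y k t₁
    have hk3 : tentf β (y k) t₃ ≤ tentf β (y j) t₃ := by
      rw [hs3]; exact le_Fenv β y k t₃
    rcases le_total ((y j) 0) ((y k) 0) with hc | hc
    · -- antitone: g t₂ = 0 ≥ g t₃ ≥ 0 where g = tent j - tent k... 
      have hmono := tent_diff_antitone hβ (y j) (y k) hc h23
      have : tentf β (y j) t₃ ≤ tentf β (y k) t₃ := by linarith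
      have heq3 : tentf β (y k) t₃ = tentf β (y j) t₃ := le_antisymm hk3 this
      rw [← h3]
      apply argm_min β y
      rw [← hs3, ← heq3]
    · have hmono := tent_diff_antitone hβ (y k) (y j) hc h12
      have : tentf β (y j) t₁ ≤ tentf β (y k) t₁ := by linarith
      have heq1 : tentf β (y k) t₁ = tentf β (y j) t₁ := le_antisymm hk1 this
      rw [← h1]
      apply argm_min β y
      rw [← hs1, ← heq1]
  have hkj : k ≤ j := argm_min β y (le_of_eq hF2.symm)
  exact le_antisymm hkj hjk


def Gs (E : Set Plane) (ε β : ℝ) : Set Plane :=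
  {x ∈ E | conicalDensity E β x ≤ ENNReal.ofReal ε}

def dlt (β : ℝ) {m : ℕ} (y : Fin (m+1) → Plane) (z : Plane) : ℝ := Fenv β y (z 0) - z 1

def dpo (β : ℝ) {m : ℕ} (y : Fin (m+1) → Plane) (z : Plane) : ℝ :=
  |z 0 - (y (argm β y (z 0))) 0|

def BSet (E : Set Plane) (ε β : ℝ) {m : ℕ} (y : Fin (m+1) → Plane) : Set Plane :=
  {z ∈ Gs E ε β | z 1 < Fenv β y (z 0)}

def NSet (E : Set Plane) (ε β : ℝ) {m : ℕ} (y : Fin (m+1) → Plane) : Set Plane :=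
  {z ∈ BSet E ε β y | dlt β y z ≤ 32*β*dpo β y z}

def DSet (E : Set Plane) (ε β : ℝ) {m : ℕ} (y : Fin (m+1) → Plane) : Set Plane :=
  {z ∈ BSet E ε β y | 32*β*dpo β y z < dlt β y z}

section Core

variable {E : Set Plane} {ε β : ℝ} {m : ℕ} {y : Fin (m+1) → Plane}

lemma Fenv_lip (hβ : 0 ≤ β) (s t : ℝ) : Fenv β y t - 2*β*|s - t| ≤ Fenv β y s := by
  have h1 := argm_spec β y t
  have h2 := tentf_lb hβ (y (argm β y t)) s t
  have h3 := le_Fenv β y (argm β y t) s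
  linarith

lemma Fenv_le_one (hβ : 0 ≤ β) (hy : ∀ j, y j ∈ Gs E ε β) (hE : E ⊆ Metric.closedBall 0 1)
    (t : ℝ) : Fenv β y t ≤ 1 := by
  apply Fenv_le
  intro j
  have h1 : |(y j) 1| ≤ 1 := coord_le_of_mem (hE (hy j).1) 1
  have h2 : tentf β (y j) t ≤ (y j) 1 := by
    unfold tentf
    nlinarith [abs_nonneg ((y j) 0 - t)]
  calc tentf β (y j) t ≤ (y j) 1 := h2
    _ ≤ 1 := (abs_le.1 h1).2

lemma dlt_pos {z : Plane} (hz : z ∈ BSet E ε β y) : 0 < dlt β y z := by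
  have := hz.2
  unfold dlt
  linarith

lemma dlt_le_two (hβ : 0 ≤ β) (hy : ∀ j, y j ∈ Gs E ε β) (hE : E ⊆ Metric.closedBall 0 1)
    {z : Plane} (hz : z ∈ BSet E ε β y) : dlt β y z ≤ 2 := by
  have h1 : |z 1| ≤ 1 := coord_le_of_mem (hE hz.1.1) 1
  have h2 := Fenv_le_one (E := E) (ε := ε) hβ hy hE (z 0)
  unfold dlt
  have := (abs_le.1 h1).1
  linarith

/-- The apex identity: `(y (argm (z 0))) 1 - z 1 = dlt z + 2 β dpo z`. -/
lemma apex_identity (z : Plane) :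
    (y (argm β y (z 0))) 1 - z 1 = dlt β y z + 2*β*(dpo β y z) := by
  have h := argm_spec β y (z 0)
  unfold tentf at h
  unfold dlt dpo
  have habs : |(y (argm β y (z 0))) 0 - z 0| = |z 0 - (y (argm β y (z 0))) 0| :=
    abs_sub_comm _ _
  rw [habs] at h
  linarith

lemma near_bound (hε : 0 < ε) (hβ0 : 0 < β) (hβh : β < 1/2)
    (hE : E ⊆ Metric.closedBall 0 1) (hy : ∀ j, y j ∈ Gs E ε β) :
    μH[1] (NSet E ε β y) ≤ ENNReal.ofReal (36*ε) := by
  have hβ : (0:ℝ) ≤ β := le_of_lt hβ0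
  set Sj : Fin (m+1) → Set Plane :=
    fun j => {z ∈ NSet E ε β y | argm β y (z 0) = j} with hSj
  set Ij : Fin (m+1) → Set ℝ :=
    fun j => ⋃ z ∈ Sj j, Set.uIcc (z 0) ((y j) 0) with hIj
  -- every point of Ij has argm = j
  have hargm : ∀ j, ∀ t ∈ Ij j, argm β y t = j := by
    intro j t ht
    simp only [hIj, Set.mem_iUnion] at ht
    obtain ⟨z, hzS, htu⟩ := ht
    have h1 : argm β y (z 0) = j := hzS.2
    have h2 : argm β y ((y j) 0) = j := argm_apex y hβ h1
    rcases Set.mem_uIcc.1 htu with ⟨hl, hr⟩ | ⟨hl, hr⟩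
    · exact argm_between y hβ hl hr h1 h2
    · exact argm_between y hβ hl hr h2 h1
  -- Ij is ord-connected hence measurable
  have hIoc : ∀ j, (Ij j).OrdConnected := by
    intro j
    constructor
    intro x1 hx1 x2 hx2 w hw
    simp only [hIj, Set.mem_iUnion] at hx1 hx2 ⊢
    obtain ⟨z1, hz1, hx1u⟩ := hx1
    obtain ⟨z2, hz2, hx2u⟩ := hx2
    have hw2 : w ∈ Set.uIcc x1 x2 := Set.Icc_subset_uIcc hw
    have hsplit : Set.uIcc x1 x2 ⊆ Set.uIcc x1 ((y j) 0) ∪ Set.uIcc ((y j) 0) x2 :=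
      Set.uIcc_subset_uIcc_union_uIcc
    rcases hsplit hw2 with hcase | hcase
    · exact ⟨z1, hz1, Set.uIcc_subset_uIcc hx1u Set.right_mem_uIcc hcase⟩
    · exact ⟨z2, hz2, Set.uIcc_subset_uIcc Set.right_mem_uIcc hx2u hcase⟩
  -- Ij ⊆ Icc (-1) 1
  have hIsub : ∀ j, Ij j ⊆ Set.Icc (-1) 1 := by
    intro j t ht
    simp only [hIj, Set.mem_iUnion] at ht
    obtain ⟨z, hzS, htu⟩ := ht
    have h1 : |z 0| ≤ 1 := coord_le_of_mem (hE hzS.1.1.1.1) 0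
    have h2 : |(y j) 0| ≤ 1 := coord_le_of_mem (hE (hy j).1) 0
    have hmem1 : z 0 ∈ Set.Icc (-1:ℝ) 1 := ⟨by linarith [(abs_le.1 h1).1], (abs_le.1 h1).2⟩
    have hmem2 : (y j) 0 ∈ Set.Icc (-1:ℝ) 1 := ⟨by linarith [(abs_le.1 h2).1], (abs_le.1 h2).2⟩
    have : Set.uIcc (z 0) ((y j) 0) ⊆ Set.uIcc (-1:ℝ) 1 := by
      apply Set.uIcc_subset_uIcc
      · rw [Set.uIcc_of_le (by norm_num : (-1:ℝ) ≤ 1)]; exact hmem1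
      · rw [Set.uIcc_of_le (by norm_num : (-1:ℝ) ≤ 1)]; exact hmem2
    have h3 := this htu
    rw [Set.uIcc_of_le (by norm_num : (-1:ℝ) ≤ 1)] at h3
    exact h3
  -- disjointness
  have hdisj : ∀ j k, j ≠ k → Disjoint (Ij j) (Ij k) := by
    intro j k hjk
    rw [Set.disjoint_left]
    intro t htj htk
    exact hjk ((hargm j t htj).symm.trans (hargm k t htk))
  set rr : Fin (m+1) → ℝ := fun j => (volume (Ij j)).toReal with hrr
  have hvol_fin : ∀ j, volume (Ij j) ≠ ⊤ := by
    intro j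
    apply ne_top_of_le_ne_top (b := volume (Set.Icc (-1:ℝ) 1))
    · rw [Real.volume_Icc]; exact ENNReal.ofReal_ne_top
    · exact measure_mono (hIsub j)
  -- d(z) ≤ rr j
  have hd_le : ∀ j, ∀ z ∈ Sj j, dpo β y z ≤ rr j := by
    intro j z hz
    have h1 : Set.uIcc (z 0) ((y j) 0) ⊆ Ij j := by
      intro t ht
      simp only [hIj, Set.mem_iUnion]
      exact ⟨z, hz, ht⟩
    have h2 : volume (Set.uIcc (z 0) ((y j) 0)) ≤ volume (Ij j) := measure_mono h1
    have h3 : volume (Set.uIcc (z 0) ((y j) 0)) = ENNReal.ofReal (dpo β y z) := by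
      rw [Set.uIcc, Real.volume_Icc]
      congr 1
      unfold dpo
      rw [hz.2]
      rcases le_total (z 0) ((y j) 0) with hc | hc
      · rw [max_eq_right hc, min_eq_left hc, abs_of_nonpos (by linarith)]
        ring
      · rw [max_eq_left hc, min_eq_right hc, abs_of_nonneg (by linarith)]
    have hnn : 0 ≤ dpo β y z := by unfold dpo; exact abs_nonneg _
    calc dpo β y z = (ENNReal.ofReal (dpo β y z)).toReal := (ENNReal.toReal_ofReal hnn).symm
      _ ≤ (volume (Ij j)).toReal := by
          apply ENNReal.toReal_mono (hvol_fin j)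
          rw [← h3]; exact h2
  -- Sj inside cone/ball
  have hSsub : ∀ j, Sj j ⊆ cone β (y j) ∩ Metric.closedBall (y j) (18 * rr j) ∩ E := by
    intro j z hzmem
    obtain ⟨⟨⟨hzG, hzB⟩, hznear⟩, hzarg⟩ := hzmem
    have hδ : 0 < dlt β y z := dlt_pos ⟨hzG, hzB⟩
    have hid := apex_identity (β := β) (y := y) z
    rw [hzarg] at hid
    have hd0 : 0 ≤ dpo β y z := abs_nonneg _
    have hdpo : dpo β y z = |z 0 - (y j) 0| := by unfold dpo; rw [hzarg]
    refine ⟨⟨?_, ?_⟩, hzG.1⟩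
    · -- cone
      show β * |z 0 - (y j) 0| ≤ |z 1 - (y j) 1|
      have h1 : (y j) 1 - z 1 = dlt β y z + 2*β*(dpo β y z) := hid
      have h2 : |z 1 - (y j) 1| = (y j) 1 - z 1 := by
        rw [abs_sub_comm, abs_of_nonneg (by nlinarith)]
      rw [h2, ← hdpo]
      nlinarith
    · -- ball
      rw [Metric.mem_closedBall]
      have h1 := dist_le_coord z (y j)
      have h2 : |z 1 - (y j) 1| = dlt β y z + 2*β*(dpo β y z) := by
        rw [abs_sub_comm, abs_of_nonneg (by nlinarith)]
        linarith [hid]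
      have h3 : dpo β y z ≤ rr j := hd_le j z ⟨⟨⟨hzG, hzB⟩, hznear⟩, hzarg⟩
      have hnear : dlt β y z ≤ 32*β*dpo β y z := hznear
      calc dist z (y j) ≤ |z 0 - (y j) 0| + |z 1 - (y j) 1| := h1
        _ = dpo β y z + (dlt β y z + 2*β*(dpo β y z)) := by rw [← hdpo, h2]
        _ ≤ 18 * dpo β y z := by nlinarith
        _ ≤ 18 * rr j := by linarith
  -- measure of each Sj
  have hSj_meas : ∀ j, μH[1] (Sj j) ≤ ENNReal.ofReal (ε * (18 * rr j)) := by
    intro j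
    rcases Set.eq_empty_or_nonempty (Sj j) with he | hne
    · rw [he]
      simp
    · obtain ⟨z, hz⟩ := hne
      have hrpos : 0 < rr j := by
        have h1 : dpo β y z ≤ rr j := hd_le j z hz
        have hδ : 0 < dlt β y z := dlt_pos hz.1.1
        have hnear : dlt β y z ≤ 32*β*dpo β y z := hz.1.2
        nlinarith [abs_nonneg (z 0 - (y (argm β y (z 0))) 0)]
      exact budget (le_of_lt hε) (hy j).2 (by linarith) (hSsub j)
  -- sum of rr
  have hrr_sum : ∑ j, rr j ≤ 2 := by
    have h1 : ∑ j, volume (Ij j) ≤ ENNReal.ofReal 2 := by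
      have hmeas : ∀ j ∈ Finset.univ, MeasurableSet (Ij j) :=
        fun j _ => (hIoc j).measurableSet
      have hdisj' : ((Finset.univ : Finset (Fin (m+1))) : Set (Fin (m+1))).PairwiseDisjoint Ij := by
        intro a _ b _ hab
        exact hdisj a b hab
      rw [← measure_biUnion_finset hdisj' hmeas]
      have hsub : (⋃ j ∈ Finset.univ, Ij j) ⊆ Set.Icc (-1:ℝ) 1 := by
        intro t ht
        simp only [Set.mem_iUnion] at ht
        obtain ⟨j, _, htj⟩ := ht
        exact hIsub j htj
      calc volume (⋃ j ∈ Finset.univ, Ij j) ≤ volume (Set.Icc (-1:ℝ) 1) := measure_mono hsub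
        _ = ENNReal.ofReal 2 := by rw [Real.volume_Icc]; norm_num
    have h2 : ∑ j, rr j = (∑ j, volume (Ij j)).toReal := by
      rw [ENNReal.toReal_sum]
      intro j _
      exact hvol_fin j
    rw [h2]
    calc (∑ j, volume (Ij j)).toReal ≤ (ENNReal.ofReal 2).toReal :=
          ENNReal.toReal_mono ENNReal.ofReal_ne_top h1
      _ = 2 := by rw [ENNReal.toReal_ofReal]; norm_num
  -- put together
  have hcover : NSet E ε β y ⊆ ⋃ j ∈ Finset.univ, Sj j := by
    intro z hz
    simp only [Set.mem_iUnion]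
    exact ⟨argm β y (z 0), Finset.mem_univ _, hz, rfl⟩
  calc μH[1] (NSet E ε β y) ≤ μH[1] (⋃ j ∈ Finset.univ, Sj j) := measure_mono hcover
    _ ≤ ∑ j, μH[1] (Sj j) := measure_biUnion_finset_le _ _
    _ ≤ ∑ j, ENNReal.ofReal (ε * (18 * rr j)) := Finset.sum_le_sum (fun j _ => hSj_meas j)
    _ = ENNReal.ofReal (∑ j, ε * (18 * rr j)) := by
        rw [ENNReal.ofReal_sum_of_nonneg]
        intro j _
        have : 0 ≤ rr j := ENNReal.toReal_nonneg
        positivity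
    _ ≤ ENNReal.ofReal (36*ε) := by
        apply ENNReal.ofReal_le_ofReal
        have : ∑ j, ε * (18 * rr j) = 18 * ε * (∑ j, rr j) := by
          rw [Finset.mul_sum]
          congr 1
          ext j
          ring
        rw [this]
        nlinarith

def Dof (β : ℝ) {m : ℕ} (y : Fin (m+1) → Plane) (S : Set Plane) : ℝ := sSup (dlt β y '' S)

def pickP (β : ℝ) {m : ℕ} (y : Fin (m+1) → Plane) (S : Set Plane) : Plane :=
  if h : ∃ z ∈ S, Dof β y S / 2 < dlt β y z then h.choose else y 0

def stepP (β : ℝ) {m : ℕ} (y : Fin (m+1) → Plane) (S : Set Plane) : Set Plane :=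
  S \ {w | |w 0 - (pickP β y S) 0| ≤ Dof β y S / (32*β)}

lemma Dof_nonneg (hβ : 0 ≤ β) (hy : ∀ j, y j ∈ Gs E ε β)
    (hE : E ⊆ Metric.closedBall 0 1) {S : Set Plane} (hS : S ⊆ BSet E ε β y) :
    0 ≤ Dof β y S := by
  rcases Set.eq_empty_or_nonempty S with he | hne
  · rw [he]
    unfold Dof
    rw [Set.image_empty]
    rw [Real.sSup_empty]
  · obtain ⟨z, hz⟩ := hne
    have h1 : BddAbove (dlt β y '' S) :=
      ⟨2, by rintro x ⟨w, hw, rfl⟩; exact dlt_le_two hβ hy hE (hS hw)⟩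
    have h2 : dlt β y z ≤ Dof β y S := le_csSup h1 (Set.mem_image_of_mem _ hz)
    linarith [dlt_pos (hS hz)]

lemma pick_spec (hβ : 0 ≤ β) (hy : ∀ j, y j ∈ Gs E ε β) (hE : E ⊆ Metric.closedBall 0 1)
    {S : Set Plane} (hS : S ⊆ BSet E ε β y) (hne : S.Nonempty) :
    pickP β y S ∈ S ∧ Dof β y S / 2 < dlt β y (pickP β y S) ∧ 0 < Dof β y S ∧
      Dof β y S ≤ 2 ∧ ∀ z ∈ S, dlt β y z ≤ Dof β y S := by
  have hbdd : BddAbove (dlt β y '' S) :=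
    ⟨2, by rintro x ⟨w, hw, rfl⟩; exact dlt_le_two hβ hy hE (hS hw)⟩
  have hub : ∀ z ∈ S, dlt β y z ≤ Dof β y S :=
    fun z hz => le_csSup hbdd (Set.mem_image_of_mem _ hz)
  obtain ⟨z0, hz0⟩ := hne
  have hD0 : 0 < Dof β y S := lt_of_lt_of_le (dlt_pos (hS hz0)) (hub z0 hz0)
  have hD2 : Dof β y S ≤ 2 := by
    apply csSup_le (Set.Nonempty.image _ ⟨z0, hz0⟩)
    rintro x ⟨w, hw, rfl⟩
    exact dlt_le_two hβ hy hE (hS hw)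
  have hex : ∃ z ∈ S, Dof β y S / 2 < dlt β y z := by
    obtain ⟨x, hx, hlt⟩ := exists_lt_of_lt_csSup (Set.Nonempty.image _ ⟨z0, hz0⟩)
      (half_lt_self hD0)
    obtain ⟨z, hz, rfl⟩ := hx
    exact ⟨z, hz, hlt⟩
  have hp : pickP β y S = hex.choose := dif_pos hex
  obtain ⟨hmem, hgt⟩ := hex.choose_spec
  rw [hp]
  exact ⟨hmem, hgt, hD0, hD2, hub⟩

lemma Dof_mono (hβ : 0 ≤ β) (hy : ∀ j, y j ∈ Gs E ε β) (hE : E ⊆ Metric.closedBall 0 1)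
    {S S' : Set Plane} (hS : S ⊆ BSet E ε β y) (hS' : S' ⊆ S) (hne' : S'.Nonempty) :
    Dof β y S' ≤ Dof β y S := by
  apply csSup_le_csSup
  · exact ⟨2, by rintro x ⟨w, hw, rfl⟩; exact dlt_le_two hβ hy hE (hS hw)⟩
  · exact Set.Nonempty.image _ hne'
  · exact Set.image_mono hS'

lemma rad_ineq {β D a c : ℝ} (hβ0 : 0 < β) (hβh : β < 1/2) (hD : 0 ≤ D)
    (ha : a ≤ 2) (ha0 : 0 ≤ a) (hc : c ≤ 2) (hc0 : 0 ≤ c) :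
    a*(D/(32*β)) + c*D ≤ 2*D/β := by
  obtain ⟨u, hu0, huD⟩ : ∃ u, 0 ≤ u ∧ D = u*β :=
    ⟨D/β, div_nonneg hD hβ0.le, (div_mul_cancel₀ D (ne_of_gt hβ0)).symm⟩
  rw [huD]
  have hβne : β ≠ 0 := ne_of_gt hβ0
  have e1 : u*β/(32*β) = u/32 := by field_simp
  have e2 : 2*(u*β)/β = 2*u := by field_simp
  rw [e1, e2]
  have A1 : a*(u/32) ≤ 2*(u/32) := by
    apply mul_le_mul_of_nonneg_right ha
    positivity
  have A2 : c*(u*β) ≤ 2*(u*β) := by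
    apply mul_le_mul_of_nonneg_right hc
    positivity
  have A3 : (2:ℝ)*(u*β) ≤ 2*(u*(1/2)) := by
    have : u*β ≤ u*(1/2) := mul_le_mul_of_nonneg_left hβh.le hu0
    linarith
  linarith

lemma win_bound (hε : 0 < ε) (hβ0 : 0 < β) (hβh : β < 1/2)
    (hE : E ⊆ Metric.closedBall 0 1) (hy : ∀ j, y j ∈ Gs E ε β)
    {S : Set Plane} (hS : S ⊆ DSet E ε β y) :
    μH[1] (S ∩ {w | |w 0 - (pickP β y S) 0| ≤ Dof β y S / (32*β)}) ≤
      ENNReal.ofReal (4*ε/β * Dof β y S) := by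
  have hβ : (0:ℝ) ≤ β := hβ0.le
  have hSB : S ⊆ BSet E ε β y := fun z hz => (hS hz).1
  rcases Set.eq_empty_or_nonempty S with he | hne
  · rw [he, Set.empty_inter]
    simp only [measure_empty]
    exact zero_le
  obtain ⟨hz1S, hz1δ, hD0, hD2, hub⟩ := pick_spec hβ hy hE hSB hne
  set z1 : Plane := pickP β y S with hz1
  set D : ℝ := Dof β y S with hD
  set W : ℝ := D/(32*β) with hWdef
  have hβne : β ≠ 0 := ne_of_gt hβ0
  have hβW : β*W = D/32 := by rw [hWdef]; field_simp
  have hW0 : 0 ≤ W := by positivity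
  have hz1D : z1 ∈ DSet E ε β y := hS hz1S
  have hz1B : z1 ∈ BSet E ε β y := hz1D.1
  have hd1 : 32*β*(dpo β y z1) < dlt β y z1 := hz1D.2
  set d1 : ℝ := dpo β y z1 with hd1def
  have hd10 : 0 ≤ d1 := by rw [hd1def]; unfold dpo; exact abs_nonneg _
  have hβd1 : β*d1 < D/32 := by
    have e : 32*β*d1 = 32*(β*d1) := by ring
    have h2 : dlt β y z1 ≤ D := hub z1 hz1S
    nlinarith
  have hd1W : d1 < W := by
    have := hβd1
    rw [← hβW] at this
    exact lt_of_mul_lt_mul_left this hβ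
  set j1 := argm β y (z1 0) with hj1
  set q : Plane := y j1 with hq
  have hq1 : q 1 - z1 1 = dlt β y z1 + 2*β*d1 := apex_identity z1
  have hqd : |z1 0 - q 0| = d1 := by rw [hd1def]; unfold dpo; rfl
  -- the two pieces
  set A : Set Plane := S ∩ {w | |w 0 - z1 0| ≤ W} ∩ {w | dlt β y w ≤ 3/8*D} with hA
  set B : Set Plane := S ∩ {w | |w 0 - z1 0| ≤ W} ∩ {w | 3/8*D < dlt β y w} with hB
  have hcover : S ∩ {w | |w 0 - z1 0| ≤ W} ⊆ A ∪ B := by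
    intro w hw
    rcases le_or_gt (dlt β y w) (3/8*D) with hc | hc
    · exact Or.inl ⟨hw, hc⟩
    · exact Or.inr ⟨hw, hc⟩
  have hAsub : A ⊆ cone β z1 ∩ Metric.closedBall z1 (2*D/β) ∩ E := by
    intro z' hz'
    obtain ⟨⟨hz'S, hwin⟩, hsmall⟩ := hz'
    have hz'B : z' ∈ BSet E ε β y := hSB hz'S
    have hδ'0 : 0 < dlt β y z' := dlt_pos hz'B
    have hδ'le : dlt β y z' ≤ D := hub z' hz'S
    have hwin' : |z' 0 - z1 0| ≤ W := hwin
    have hβabs : β*|z' 0 - z1 0| ≤ D/32 := by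
      calc β*|z' 0 - z1 0| ≤ β*W := mul_le_mul_of_nonneg_left hwin' hβ
        _ = D/32 := hβW
    have hFlip : Fenv β y (z1 0) - 2*β*|z' 0 - z1 0| ≤ Fenv β y (z' 0) :=
      Fenv_lip hβ (z' 0) (z1 0)
    have hδ'def : dlt β y z' = Fenv β y (z' 0) - z' 1 := rfl
    have hδ1def : dlt β y z1 = Fenv β y (z1 0) - z1 1 := rfl
    have hdiff : z' 1 - z1 1 ≥ D/16 := by
      have h38 : dlt β y z' ≤ 3/8*D := hsmall
      have hgt : D/2 < dlt β y z1 := hz1δ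
      linarith
    refine ⟨⟨?_, ?_⟩, hz'B.1.1⟩
    · show β * |z' 0 - z1 0| ≤ |z' 1 - z1 1|
      have habs : |z' 1 - z1 1| = z' 1 - z1 1 := abs_of_nonneg (by linarith)
      rw [habs]
      linarith
    · rw [Metric.mem_closedBall]
      have htri := dist_le_coord z' z1
      have hup : z' 1 - z1 1 ≤ 17/16*D := by
        have hgt : D/2 < dlt β y z1 := hz1δ
        have h1 : dlt β y z1 ≤ D := hub z1 hz1S
        have hFlip2 : Fenv β y (z' 0) - 2*β*|z1 0 - z' 0| ≤ Fenv β y (z1 0) :=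
          Fenv_lip hβ (z1 0) (z' 0)
        have habscomm : |z1 0 - z' 0| = |z' 0 - z1 0| := abs_sub_comm _ _
        rw [habscomm] at hFlip2
        linarith
      have habs : |z' 1 - z1 1| = z' 1 - z1 1 := abs_of_nonneg (by linarith)
      have hra : 1*(D/(32*β)) + (17/16)*D ≤ 2*D/β :=
        rad_ineq hβ0 hβh hD0.le (by norm_num) (by norm_num) (by norm_num) (by norm_num)
      have hra' : W + 17/16*D ≤ 2*D/β := by rw [hWdef]; linarith
      calc dist z' z1 ≤ |z' 0 - z1 0| + |z' 1 - z1 1| := htri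
        _ ≤ W + 17/16*D := by rw [habs]; linarith
        _ ≤ 2*D/β := hra'
  have hBsub : B ⊆ cone β q ∩ Metric.closedBall q (2*D/β) ∩ E := by
    intro z' hz'
    obtain ⟨⟨hz'S, hwin⟩, hbig⟩ := hz'
    have hbig' : 3/8*D < dlt β y z' := hbig
    have hz'B : z' ∈ BSet E ε β y := hSB hz'S
    have hδ'0 : 0 < dlt β y z' := dlt_pos hz'B
    have hδ'le : dlt β y z' ≤ D := hub z' hz'S
    have hwin' : |z' 0 - z1 0| ≤ W := hwin
    have hβabs : β*|z' 0 - z1 0| ≤ D/32 := by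
      calc β*|z' 0 - z1 0| ≤ β*W := mul_le_mul_of_nonneg_left hwin' hβ
        _ = D/32 := hβW
    have hFlip : Fenv β y (z' 0) - 2*β*|z1 0 - z' 0| ≤ Fenv β y (z1 0) :=
      Fenv_lip hβ (z1 0) (z' 0)
    have habscomm : |z1 0 - z' 0| = |z' 0 - z1 0| := abs_sub_comm _ _
    rw [habscomm] at hFlip
    have hδ'def : dlt β y z' = Fenv β y (z' 0) - z' 1 := rfl
    have hδ1def : dlt β y z1 = Fenv β y (z1 0) - z1 1 := rfl
    -- q 1 - z' 1 bounds
    have hqz' : q 1 - z' 1 = (Fenv β y (z1 0) - Fenv β y (z' 0)) + 2*β*d1 + dlt β y z' := by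
      have := hq1
      linarith
    have hlow : q 1 - z' 1 ≥ 2*β*d1 + dlt β y z' - 2*(D/32) := by
      have h2 : Fenv β y (z1 0) - Fenv β y (z' 0) ≥ -(2*β*|z' 0 - z1 0|) := by linarith
      have h3 : 2*β*|z' 0 - z1 0| ≤ 2*(D/32) := by linarith
      linarith
    have htriq : |z' 0 - q 0| ≤ |z' 0 - z1 0| + |z1 0 - q 0| := abs_sub_le _ _ _
    have htriq' : |z' 0 - q 0| ≤ W + d1 := by
      rw [hqd] at htriq
      linarith
    have hβtq : β*|z' 0 - q 0| ≤ D/32 + β*d1 := by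
      have := mul_le_mul_of_nonneg_left htriq' hβ
      have e : β*(W + d1) = β*W + β*d1 := by ring
      rw [e, hβW] at this
      linarith
    have hqz'pos : 0 < q 1 - z' 1 := by
      have : (0:ℝ) ≤ 2*β*d1 := by positivity
      linarith
    refine ⟨⟨?_, ?_⟩, hz'B.1.1⟩
    · show β * |z' 0 - q 0| ≤ |z' 1 - q 1|
      have habs : |z' 1 - q 1| = q 1 - z' 1 := by
        rw [abs_sub_comm]
        exact abs_of_pos hqz'pos
      rw [habs]
      have : (0:ℝ) ≤ β*d1 := by positivity
      linarith
    · rw [Metric.mem_closedBall]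
      have htri := dist_le_coord z' q
      have hupF : Fenv β y (z1 0) - Fenv β y (z' 0) ≤ 2*(D/32) := by
        have hFlip2 : Fenv β y (z' 0) ≥ Fenv β y (z1 0) - 2*β*|z' 0 - z1 0| :=
          Fenv_lip hβ (z' 0) (z1 0)
        linarith
      have hup : q 1 - z' 1 ≤ 2*(D/32) + 2*(D/32) + D := by
        have h4 : 2*β*d1 ≤ 2*(D/32) := by linarith
        linarith
      have habs : |z' 1 - q 1| = q 1 - z' 1 := by
        rw [abs_sub_comm]
        exact abs_of_pos hqz'pos
      have hra : 2*(D/(32*β)) + (9/8)*D ≤ 2*D/β :=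
        rad_ineq hβ0 hβh hD0.le (by norm_num) (by norm_num) (by norm_num) (by norm_num)
      have hra' : 2*W + (9/8)*D ≤ 2*D/β := by rw [hWdef]; linarith
      calc dist z' q ≤ |z' 0 - q 0| + |z' 1 - q 1| := htri
        _ ≤ (W + d1) + (q 1 - z' 1) := by rw [habs]; linarith
        _ ≤ 2*W + (9/8)*D := by
            have h9 : q 1 - z' 1 ≤ (9/8)*D := by linarith
            linarith
        _ ≤ 2*D/β := hra'
  -- measures
  have hz1G : z1 ∈ Gs E ε β := hz1B.1
  have hr0 : (0:ℝ) < 2*D/β := by positivity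
  have hmA : μH[1] A ≤ ENNReal.ofReal (ε * (2*D/β)) :=
    budget hε.le hz1G.2 hr0 hAsub
  have hmB : μH[1] B ≤ ENNReal.ofReal (ε * (2*D/β)) :=
    budget hε.le (hy j1).2 hr0 hBsub
  calc μH[1] (S ∩ {w | |w 0 - z1 0| ≤ W}) ≤ μH[1] (A ∪ B) := measure_mono hcover
    _ ≤ μH[1] A + μH[1] B := measure_union_le _ _
    _ ≤ ENNReal.ofReal (ε * (2*D/β)) + ENNReal.ofReal (ε * (2*D/β)) := add_le_add hmA hmB
    _ = ENNReal.ofReal (ε * (2*D/β) + ε * (2*D/β)) := by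
        rw [ENNReal.ofReal_add (by positivity) (by positivity)]
    _ = ENNReal.ofReal (4*ε/β * D) := by
        congr 1
        field_simp
        ring

lemma deep_bound (hε : 0 < ε) (hβ0 : 0 < β) (hβh : β < 1/2)
    (hE : E ⊆ Metric.closedBall 0 1) (hy : ∀ j, y j ∈ Gs E ε β) :
    μH[1] (DSet E ε β y) ≤ ENNReal.ofReal (136 * ε / β) := by
  classical
  have hβ : (0:ℝ) ≤ β := hβ0.le
  have hβne : β ≠ 0 := ne_of_gt hβ0
  set P : ℕ → Set Plane := fun i => (stepP β y)^[i] (DSet E ε β y) with hP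
  have hPsucc : ∀ i, P (i+1) = stepP β y (P i) := by
    intro i
    rw [hP]
    exact Function.iterate_succ_apply' _ _ _
  have hPstep : ∀ i, P (i+1) ⊆ P i := by
    intro i
    rw [hPsucc i]
    exact Set.diff_subset
  have hP0 : P 0 = DSet E ε β y := by rw [hP]; rfl
  have hPsub : ∀ i, P i ⊆ DSet E ε β y := by
    intro i
    induction i with
    | zero => rw [hP0]
    | succ k ih => exact (hPstep k).trans ih
  have hPmono : ∀ i j, i ≤ j → P j ⊆ P i := by
    intro i j hij
    induction j with
    | zero =>
      have h0 : i = 0 := Nat.le_zero.1 hij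
      rw [h0]
    | succ k ih =>
      rcases Nat.lt_or_ge i (k+1) with hc | hc
      · have hik : i ≤ k := Nat.lt_succ_iff.1 hc
        exact (hPstep k).trans (ih hik)
      · have hik : i = k+1 := le_antisymm hij hc
        rw [hik]
  have hPB : ∀ i, P i ⊆ BSet E ε β y := fun i => (hPsub i).trans (fun z hz => hz.1)
  -- the packing estimate
  have pack : ∀ s : Finset ℕ, ∑ i ∈ s, Dof β y (P i) ≤ 34 := by
    intro s
    set s' := s.filter (fun i => (P i).Nonempty) with hs'
    have hzero : ∀ i ∈ s, i ∉ s' → Dof β y (P i) = 0 := by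
      intro i hi hins
      have hne : ¬ (P i).Nonempty := by
        intro hcon
        exact hins (Finset.mem_filter.2 ⟨hi, hcon⟩)
      have he : P i = ∅ := Set.not_nonempty_iff_eq_empty.1 hne
      rw [he]
      unfold Dof
      rw [Set.image_empty, Real.sSup_empty]
    have hsum_eq : ∑ i ∈ s, Dof β y (P i) = ∑ i ∈ s', Dof β y (P i) :=
      (Finset.sum_subset (Finset.filter_subset _ _) hzero).symm
    rw [hsum_eq]
    have hspec : ∀ i ∈ s', pickP β y (P i) ∈ P i ∧ 0 < Dof β y (P i) ∧ Dof β y (P i) ≤ 2 := by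
      intro i hi
      have hne : (P i).Nonempty := (Finset.mem_filter.1 hi).2
      obtain ⟨h1, _, h3, h4, _⟩ := pick_spec hβ hy hE (hPB i) hne
      exact ⟨h1, h3, h4⟩
    have htc1 : ∀ i ∈ s', |(pickP β y (P i)) 0| ≤ 1 := by
      intro i hi
      have h1 : pickP β y (P i) ∈ P i := (hspec i hi).1
      have h2 : pickP β y (P i) ∈ E := ((hPB i) h1).1.1
      exact coord_le_of_mem (hE h2) 0
    have hsep : ∀ i ∈ s', ∀ j ∈ s', i < j →
        Dof β y (P i)/(32*β) < |(pickP β y (P j)) 0 - (pickP β y (P i)) 0| := by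
      intro i hi j hj hij
      have hpj : pickP β y (P j) ∈ P j := (hspec j hj).1
      have h2 : pickP β y (P j) ∈ P (i+1) := hPmono (i+1) j hij hpj
      rw [hPsucc i] at h2
      have h3 := h2.2
      simp only [Set.mem_setOf_eq, not_le] at h3
      exact h3
    have hDmono : ∀ i ∈ s', ∀ j ∈ s', i ≤ j → Dof β y (P j) ≤ Dof β y (P i) := by
      intro i _ j hj hij
      exact Dof_mono hβ hy hE (hPB i) (hPmono i j hij) (Finset.mem_filter.1 hj).2
    set K : ℕ → Set ℝ := fun i =>
      Set.Icc ((pickP β y (P i)) 0 - Dof β y (P i)/(64*β))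
        ((pickP β y (P i)) 0 + Dof β y (P i)/(64*β)) with hK
    have hdisj : (s' : Set ℕ).PairwiseDisjoint K := by
      have key : ∀ a ∈ s', ∀ b ∈ s', a < b → Disjoint (K a) (K b) := by
        intro a ha b hb hlt
        rw [Set.disjoint_left]
        intro x hxa hxb
        rw [hK] at hxa hxb
        simp only [Set.mem_Icc] at hxa hxb
        have hρba : Dof β y (P b)/(64*β) ≤ Dof β y (P a)/(64*β) :=
          (div_le_div_iff_of_pos_right (by positivity)).2 (hDmono a ha b hb hlt.le)
        have h4 := hsep a ha b hb hlt
        have he : Dof β y (P a)/(32*β) = Dof β y (P a)/(64*β) + Dof β y (P a)/(64*β) := by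
          ring
        rcases abs_cases ((pickP β y (P b)) 0 - (pickP β y (P a)) 0) with ⟨hc, _⟩ | ⟨hc, _⟩ <;>
          rw [hc] at h4 <;> linarith
      intro a ha b hb hab
      rcases lt_or_gt_of_ne hab with hc | hc
      · exact key a ha b hb hc
      · exact (key b hb a ha hc).symm
    have hKsub : ∀ i ∈ s', K i ⊆ Set.Icc (-(1+1/(32*β))) (1+1/(32*β)) := by
      intro i hi x hx
      rw [hK] at hx
      simp only [Set.mem_Icc] at hx ⊢
      have h1 := htc1 i hi
      have h2 := (hspec i hi).2.2
      have h3 : Dof β y (P i)/(64*β) ≤ 1/(32*β) := by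
        have e : (2:ℝ)/(64*β) = 1/(32*β) := by ring
        rw [← e]
        exact (div_le_div_iff_of_pos_right (by positivity)).2 h2
      obtain ⟨hx1, hx2⟩ := hx
      obtain ⟨h4a, h4b⟩ := abs_le.1 h1
      exact ⟨by linarith, by linarith⟩
    have hKvol : ∀ i ∈ s', volume (K i) = ENNReal.ofReal (Dof β y (P i)/(32*β)) := by
      intro i hi
      rw [hK]
      rw [Real.volume_Icc]
      congr 1
      ring
    have hreal : ∑ i ∈ s', Dof β y (P i)/(32*β) ≤ 2 + 2/(32*β) := by
      have hofsum : ENNReal.ofReal (∑ i ∈ s', Dof β y (P i)/(32*β)) =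
          ∑ i ∈ s', volume (K i) := by
        rw [ENNReal.ofReal_sum_of_nonneg]
        · exact Finset.sum_congr rfl (fun i hi => (hKvol i hi).symm)
        · intro i hi
          have := (hspec i hi).2.1
          positivity
      have hv1 : ∑ i ∈ s', volume (K i) = volume (⋃ i ∈ s', K i) :=
        (measure_biUnion_finset hdisj (fun i _ => measurableSet_Icc)).symm
      have hv2 : volume (⋃ i ∈ s', K i) ≤ ENNReal.ofReal (2 + 2/(32*β)) := by
        have hsub : (⋃ i ∈ s', K i) ⊆ Set.Icc (-(1+1/(32*β))) (1+1/(32*β)) := by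
          intro x hx
          simp only [Set.mem_iUnion] at hx
          obtain ⟨i, hi, hxi⟩ := hx
          exact hKsub i hi hxi
        calc volume (⋃ i ∈ s', K i) ≤ volume (Set.Icc (-(1+1/(32*β))) (1+1/(32*β))) :=
              measure_mono hsub
          _ = ENNReal.ofReal (2 + 2/(32*β)) := by
              rw [Real.volume_Icc]
              congr 1
              ring
      have hfinal : ENNReal.ofReal (∑ i ∈ s', Dof β y (P i)/(32*β)) ≤
          ENNReal.ofReal (2 + 2/(32*β)) := by
        rw [hofsum, hv1]
        exact hv2
      rw [ENNReal.ofReal_le_ofReal_iff (by positivity)] at hfinal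
      exact hfinal
    have hcalc : ∑ i ∈ s', Dof β y (P i) = (∑ i ∈ s', Dof β y (P i)/(32*β))*(32*β) := by
      rw [Finset.sum_mul]
      apply Finset.sum_congr rfl
      intro i _
      rw [div_mul_cancel₀]
      positivity
    rw [hcalc]
    calc (∑ i ∈ s', Dof β y (P i)/(32*β))*(32*β) ≤ (2 + 2/(32*β))*(32*β) := by
          apply mul_le_mul_of_nonneg_right hreal
          positivity
      _ = 64*β + 2 := by field_simp; ring
      _ ≤ 34 := by nlinarith
  -- coverage
  have hcov : DSet E ε β y ⊆
      ⋃ i, (P i ∩ {w : Plane | |w 0 - (pickP β y (P i)) 0| ≤ Dof β y (P i)/(32*β)}) := by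
    intro z hz
    have hδ0 : 0 < dlt β y z := dlt_pos hz.1
    have hex : ∃ i, z ∉ P i := by
      by_contra hcon
      push_neg at hcon
      obtain ⟨N, hN⟩ := exists_nat_gt (34 / dlt β y z)
      have hub : ∀ i, dlt β y z ≤ Dof β y (P i) := fun i =>
        (pick_spec hβ hy hE (hPB i) ⟨z, hcon i⟩).2.2.2.2 z (hcon i)
      have hsum : (N : ℝ) * dlt β y z ≤ ∑ i ∈ Finset.range N, Dof β y (P i) := by
        calc (N:ℝ) * dlt β y z = ∑ _i ∈ Finset.range N, dlt β y z := by
              rw [Finset.sum_const, Finset.card_range, nsmul_eq_mul]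
          _ ≤ ∑ i ∈ Finset.range N, Dof β y (P i) :=
              Finset.sum_le_sum (fun i _ => hub i)
      have h34 := pack (Finset.range N)
      rw [div_lt_iff₀ hδ0] at hN
      linarith
    have hz0 : z ∈ P 0 := by rw [hP0]; exact hz
    set k := Nat.find hex with hk
    have hkspec : z ∉ P k := Nat.find_spec hex
    have hkpos : k ≠ 0 := by
      intro h
      rw [h] at hkspec
      exact hkspec hz0
    obtain ⟨j, hj⟩ := Nat.exists_eq_succ_of_ne_zero hkpos
    have hzj : z ∈ P j := by
      by_contra hcon
      have hlt : j < k := by omega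
      exact Nat.find_min hex hlt hcon
    have hznot : z ∉ stepP β y (P j) := by
      have h5 : z ∉ P (j+1) := by
        have := hkspec
        rw [hj] at this
        exact this
      rw [hPsucc j] at h5
      exact h5
    have hwin : |z 0 - (pickP β y (P j)) 0| ≤ Dof β y (P j)/(32*β) := by
      by_contra hcon
      exact hznot ⟨hzj, hcon⟩
    exact Set.mem_iUnion.2 ⟨j, hzj, hwin⟩
  -- conclude
  calc μH[1] (DSet E ε β y)
      ≤ μH[1] (⋃ i, (P i ∩ {w : Plane | |w 0 - (pickP β y (P i)) 0| ≤ Dof β y (P i)/(32*β)})) :=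
        measure_mono hcov
    _ ≤ ∑' i, μH[1] (P i ∩ {w : Plane | |w 0 - (pickP β y (P i)) 0| ≤ Dof β y (P i)/(32*β)}) :=
        measure_iUnion_le _
    _ ≤ ∑' i, ENNReal.ofReal (4*ε/β * Dof β y (P i)) :=
        ENNReal.tsum_le_tsum (fun i => win_bound hε hβ0 hβh hE hy (hPsub i))
    _ ≤ ENNReal.ofReal (4*ε/β * 34) := by
        rw [ENNReal.tsum_eq_iSup_sum]
        apply iSup_le
        intro s
        have h1 : ∑ i ∈ s, ENNReal.ofReal (4*ε/β * Dof β y (P i)) =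
            ENNReal.ofReal (∑ i ∈ s, 4*ε/β * Dof β y (P i)) := by
          rw [ENNReal.ofReal_sum_of_nonneg]
          intro i _
          have h0 := Dof_nonneg hβ hy hE (hPB i)
          positivity
        rw [h1]
        apply ENNReal.ofReal_le_ofReal
        rw [← Finset.mul_sum]
        have h2 := pack s
        have h3 : (0:ℝ) ≤ 4*ε/β := by positivity
        exact mul_le_mul_of_nonneg_left h2 h3
    _ = ENNReal.ofReal (136*ε/β) := by
        congr 1
        ring
lemma core_bound (hε : 0 < ε) (hβ0 : 0 < β) (hβh : β < 1/2)
    (hE : E ⊆ Metric.closedBall 0 1) (hy : ∀ j, y j ∈ Gs E ε β) :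
    μH[1] (BSet E ε β y) ≤ ENNReal.ofReal (36*ε + 136*ε/β) := by
  have hsplit : BSet E ε β y ⊆ NSet E ε β y ∪ DSet E ε β y := by
    intro z hz
    rcases le_or_gt (dlt β y z) (32*β*dpo β y z) with hc | hc
    · exact Or.inl ⟨hz, hc⟩
    · exact Or.inr ⟨hz, hc⟩
  calc μH[1] (BSet E ε β y) ≤ μH[1] (NSet E ε β y ∪ DSet E ε β y) := measure_mono hsplit
    _ ≤ μH[1] (NSet E ε β y) + μH[1] (DSet E ε β y) := measure_union_le _ _
    _ ≤ ENNReal.ofReal (36*ε) + ENNReal.ofReal (136*ε/β) :=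
        add_le_add (near_bound hε hβ0 hβh hE hy) (deep_bound hε hβ0 hβh hE hy)
    _ = ENNReal.ofReal (36*ε + 136*ε/β) := by
        rw [← ENNReal.ofReal_add (by positivity) (by positivity)]

end Core

theorem main_thm : ∃ C : ℝ, 0 < C ∧
    ∀ (E : Set Plane), E ⊆ Metric.closedBall 0 1 →
      ∀ ε ∈ Set.Ioo (0:ℝ) 1, ∀ β ∈ Set.Ioo (0:ℝ) (1/2),
        ∃ f : ℝ → ℝ, LipschitzWith (2*β).toNNReal f ∧
          μH[1] ({x ∈ E | conicalDensity E β x ≤ ENNReal.ofReal ε}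
              \ {p : Plane | p 1 = f (p 0)}) ≤ ENNReal.ofReal (C * ε / β) := by
  refine ⟨200, by norm_num, ?_⟩
  intro E hE ε hεmem β hβmem
  obtain ⟨hε0, hε1⟩ := hεmem
  obtain ⟨hβ0, hβh⟩ := hβmem
  have hβ : (0:ℝ) ≤ β := hβ0.le
  rcases Set.eq_empty_or_nonempty (Gs E ε β) with hGe | hGne
  · refine ⟨fun _ => 0, ?_, ?_⟩
    · exact (LipschitzWith.const (0:ℝ)).weaken zero_le
    · have he : {x ∈ E | conicalDensity E β x ≤ ENNReal.ofReal ε}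
          \ {p : Plane | p 1 = (fun _ : ℝ => (0:ℝ)) (p 0)} ⊆ (∅ : Set Plane) := by
        intro z hz
        have : z ∈ Gs E ε β := hz.1
        rw [hGe] at this
        exact this
      calc μH[1] _ ≤ μH[1] (∅ : Set Plane) := measure_mono he
        _ = 0 := measure_empty
        _ ≤ ENNReal.ofReal (200 * ε / β) := zero_le
  · have hne : Nonempty (Gs E ε β) := hGne.to_subtype
    obtain ⟨u, hu⟩ := TopologicalSpace.exists_dense_seq (Gs E ε β)
    set v : ℕ → Plane := fun n => ((u n : Gs E ε β) : Plane) with hv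
    have hvG : ∀ n, v n ∈ Gs E ε β := fun n => (u n).2
    have htent_le_one : ∀ n t, tentf β (v n) t ≤ 1 := by
      intro n t
      have h1 : |(v n) 1| ≤ 1 := coord_le_of_mem (hE (hvG n).1) 1
      unfold tentf
      nlinarith [abs_nonneg ((v n) 0 - t), (abs_le.1 h1).2]
    have hbdd : ∀ t, BddAbove (Set.range fun n => tentf β (v n) t) := by
      intro t
      refine ⟨1, ?_⟩
      rintro x ⟨n, rfl⟩
      exact htent_le_one n t
    set f : ℝ → ℝ := fun t => ⨆ n, tentf β (v n) t with hf
    have hle_f : ∀ n t, tentf β (v n) t ≤ f t := fun n t => le_ciSup (hbdd t) n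
    have hf_lip : ∀ s t : ℝ, f s ≤ f t + 2*β*|s - t| := by
      intro s t
      apply ciSup_le
      intro n
      have h1 := tentf_lb hβ (v n) t s
      have h2 : |t - s| = |s - t| := abs_sub_comm _ _
      have h3 := hle_f n t
      nlinarith [abs_nonneg (s - t)]
    have hLip : LipschitzWith (2*β).toNNReal f := by
      apply LipschitzWith.of_dist_le_mul
      intro s t
      rw [Real.dist_eq, Real.dist_eq]
      have hc : ((2*β).toNNReal : ℝ) = 2*β := Real.coe_toNNReal _ (by positivity)
      rw [hc]
      rw [abs_le]
      constructor
      · have := hf_lip t s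
        have h2 : |t - s| = |s - t| := abs_sub_comm _ _
        rw [h2] at this
        linarith
      · have := hf_lip s t
        linarith
    -- f dominates G
    have hkey : ∀ z ∈ Gs E ε β, z 1 ≤ f (z 0) := by
      intro z hz
      by_contra hcon
      push_neg at hcon
      set c := z 1 - f (z 0) with hc
      have hc0 : 0 < c := by rw [hc]; linarith
      have hδ : 0 < c/(2*(1+2*β)) := by positivity
      obtain ⟨n, hn⟩ := hu.exists_dist_lt (⟨z, hz⟩ : Gs E ε β) hδ
      have hdist : dist z (v n) < c/(2*(1+2*β)) := by
        rw [hv]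
        rw [Subtype.dist_eq] at hn
        exact hn
      have h1 : |(v n) 1 - z 1| ≤ dist (v n) z := coord_dist_le (v n) z 1
      have h2 : |(v n) 0 - z 0| ≤ dist (v n) z := coord_dist_le (v n) z 0
      have h3 : dist (v n) z = dist z (v n) := dist_comm _ _
      rw [h3] at h1 h2
      have h4 : tentf β (v n) (z 0) ≥ z 1 - (1+2*β)*dist z (v n) := by
        unfold tentf
        have h5 := (abs_le.1 h1).1
        nlinarith [abs_nonneg ((v n) 0 - z 0), (abs_le.1 h2).2]
      have h6 := hle_f n (z 0)
      have h7 : (1+2*β)*dist z (v n) < (1+2*β)*(c/(2*(1+2*β))) := by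
        apply mul_lt_mul_of_pos_left hdist
        positivity
      have h8 : (1+2*β)*(c/(2*(1+2*β))) = c/2 := by
        field_simp
      rw [h8] at h7
      linarith
    refine ⟨f, hLip, ?_⟩
    -- covering by finite envelopes
    set Bn : ℕ → Set Plane := fun n => BSet E ε β (fun j : Fin (n+1) => v j) with hBn
    have hcov : {x ∈ E | conicalDensity E β x ≤ ENNReal.ofReal ε}
        \ {p : Plane | p 1 = f (p 0)} ⊆ ⋃ n, Bn n := by
      intro z hz
      obtain ⟨hzG, hzn⟩ := hz
      have hzG' : z ∈ Gs E ε β := hzG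
      have hlt : z 1 < f (z 0) := lt_of_le_of_ne (hkey z hzG') hzn
      obtain ⟨n, hn⟩ := exists_lt_of_lt_ciSup hlt
      refine Set.mem_iUnion.2 ⟨n, hzG', ?_⟩
      have h1 : tentf β (v n) (z 0) ≤ Fenv β (fun j : Fin (n+1) => v j) (z 0) := by
        have := le_Fenv β (fun j : Fin (n+1) => v j) ⟨n, Nat.lt_succ_self n⟩ (z 0)
        exact this
      linarith
    have hmono : Monotone Bn := by
      intro n n' hnn z hz
      refine ⟨hz.1, lt_of_lt_of_le hz.2 ?_⟩
      apply Fenv_le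
      intro j
      have h1 := le_Fenv β (fun j : Fin (n'+1) => v j) ⟨j.1, by omega⟩ (z 0)
      exact h1
    calc μH[1] ({x ∈ E | conicalDensity E β x ≤ ENNReal.ofReal ε}
          \ {p : Plane | p 1 = f (p 0)})
        ≤ μH[1] (⋃ n, Bn n) := measure_mono hcov
      _ = ⨆ n, μH[1] (Bn n) := hmono.measure_iUnion
      _ ≤ ENNReal.ofReal (200 * ε / β) := by
          apply iSup_le
          intro n
          have hb := core_bound hε0 hβ0 hβh hE (fun j : Fin (n+1) => hvG j)
          apply hb.trans
          apply ENNReal.ofReal_le_ofReal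
          have h1 : 36*ε ≤ 64*ε/β := by
            rw [le_div_iff₀ hβ0]
            nlinarith
          have h2 : 136*ε/β + 64*ε/β = 200*ε/β := by ring
          linarith

end S7


/-- Most points of low conical density fit into a single 2β-Lipschitz graph. -/
theorem stmt7 : ∃ C : ℝ, 0 < C ∧
    ∀ (E : Set Plane), E ⊆ Metric.closedBall 0 1 →
      ∀ ε ∈ Set.Ioo (0:ℝ) 1, ∀ β ∈ Set.Ioo (0:ℝ) (1/2),
        ∃ f : ℝ → ℝ, LipschitzWith (2*β).toNNReal f ∧
          μH[1] ({x ∈ E | conicalDensity E β x ≤ ENNReal.ofReal ε}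
              \ {p : Plane | p 1 = f (p 0)}) ≤ ENNReal.ofReal (C * ε / β) :=
  S7.main_thm
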